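/- Let φ : [0,1] → [0,1] be continuously differentiable with Lipschitz constant L_φ and with φ′ Lipschitz with constant L_{φ′}, and let f ∈ C¹([0,1]). Then for every n ≥ 1, sup_{x∈[0,1]} |B_n(f∘φ;x) − f(φ(x))| ≤ (1/√n)·( L_φ · ω_{f′}(L_φ/(2√n)) + sup_{x∈[0,1]} |f′(φ(x))| · L_{φ′}/(2√n) ). -/

import Mathlib

noncomputable def bern (n k : ℕ) (x : ℝ) : ℝ :=
  (n.choose k : ℝ) * x ^ k * (1 - x) ^ (n - k)

lemma bern_eq (n k : ℕ) (x : ℝ) : bern n k x = (bernsteinPolynomial ℝ n k).eval x := by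
  simp [bern, bernsteinPolynomial]

lemma bern_sum (n : ℕ) (x : ℝ) : ∑ k ∈ Finset.range (n + 1), bern n k x = 1 := by
  have := congrArg (Polynomial.eval x) (bernsteinPolynomial.sum ℝ n)
  simpa [bern_eq, Polynomial.eval_finset_sum] using this

lemma bern_sum_smul (n : ℕ) (x : ℝ) :
    ∑ k ∈ Finset.range (n + 1), (k : ℝ) * bern n k x = n * x := by
  have := congrArg (Polynomial.eval x) (bernsteinPolynomial.sum_smul ℝ n)
  simpa [bern_eq, Polynomial.eval_finset_sum] using this

lemma bern_variance (n : ℕ) (x : ℝ) :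
    ∑ k ∈ Finset.range (n + 1), ((n : ℝ) * x - (k : ℝ)) ^ 2 * bern n k x
      = (n : ℝ) * x * (1 - x) := by
  have := congrArg (Polynomial.eval x) (bernsteinPolynomial.variance ℝ n)
  simpa [bern_eq, Polynomial.eval_finset_sum] using this

lemma bern_mean (n : ℕ) (hn : 1 ≤ n) (x : ℝ) :
    ∑ k ∈ Finset.range (n + 1), ((k : ℝ) / n - x) * bern n k x = 0 := by
  have hn0 : (n : ℝ) ≠ 0 := by positivity
  have h1 := bern_sum n x
  have h2 := bern_sum_smul n x
  have : ∑ k ∈ Finset.range (n + 1), ((k : ℝ) / n - x) * bern n k x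
      = (1 / n) * (∑ k ∈ Finset.range (n + 1), (k : ℝ) * bern n k x)
        - x * (∑ k ∈ Finset.range (n + 1), bern n k x) := by
    rw [Finset.mul_sum, Finset.mul_sum, ← Finset.sum_sub_distrib]
    refine Finset.sum_congr rfl fun k _ => by field_simp
  rw [this, h1, h2]; field_simp; ring

lemma bern_var (n : ℕ) (hn : 1 ≤ n) (x : ℝ) :
    ∑ k ∈ Finset.range (n + 1), ((k : ℝ) / n - x) ^ 2 * bern n k x
      = x * (1 - x) / n := by
  have hn0 : (n : ℝ) ≠ 0 := by positivity
  have h := bern_variance n x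
  have : ∑ k ∈ Finset.range (n + 1), ((k : ℝ) / n - x) ^ 2 * bern n k x
      = (1 / n ^ 2) * ∑ k ∈ Finset.range (n + 1), ((n : ℝ) * x - (k : ℝ)) ^ 2 * bern n k x := by
    rw [Finset.mul_sum]
    refine Finset.sum_congr rfl fun k _ => ?_
    rw [div_sub' hn0, div_pow, div_mul_eq_mul_div, one_div, inv_mul_eq_div,
      div_eq_div_iff (by positivity) (by positivity)]
    ring
  rw [this, h]; field_simp

lemma bern_nonneg (n k : ℕ) {x : ℝ} (hx : x ∈ Set.Icc (0:ℝ) 1) : 0 ≤ bern n k x := by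
  obtain ⟨h0, h1⟩ := hx
  have h2 : (0:ℝ) ≤ 1 - x := by linarith
  exact mul_nonneg (mul_nonneg (by positivity) (pow_nonneg h0 _)) (pow_nonneg h2 _)

noncomputable def bernOp (n : ℕ) (f : ℝ → ℝ) (x : ℝ) : ℝ :=
  ∑ k ∈ Finset.range (n + 1), f ((k : ℝ) / (n : ℝ)) * bern n k x

noncomputable def modCont (f : ℝ → ℝ) (δ : ℝ) : ℝ :=
  sSup {r : ℝ | ∃ x ∈ Set.Icc (0 : ℝ) 1, ∃ y ∈ Set.Icc (0 : ℝ) 1, |x - y| ≤ δ ∧ r = |f x - f y|}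

lemma modCont_bddAbove {g : ℝ → ℝ} (hg : ContinuousOn g (Set.Icc (0:ℝ) 1)) (δ : ℝ) :
    BddAbove {r : ℝ | ∃ x ∈ Set.Icc (0 : ℝ) 1, ∃ y ∈ Set.Icc (0 : ℝ) 1,
      |x - y| ≤ δ ∧ r = |g x - g y|} := by
  obtain ⟨C, hC⟩ := (isCompact_Icc).exists_bound_of_continuousOn hg
  refine ⟨C + C, ?_⟩
  rintro r ⟨x, hx, y, hy, -, rfl⟩
  calc |g x - g y| ≤ |g x| + |g y| := abs_sub _ _
    _ ≤ C + C := add_le_add (by simpa using hC x hx) (by simpa using hC y hy)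

lemma modCont_nonneg {g : ℝ → ℝ} (hg : ContinuousOn g (Set.Icc (0:ℝ) 1)) {δ : ℝ}
    (hδ : 0 ≤ δ) : 0 ≤ modCont g δ := by
  refine le_csSup (modCont_bddAbove hg δ) ⟨0, by norm_num, 0, by norm_num, by simpa, by simp⟩

lemma le_modCont {g : ℝ → ℝ} (hg : ContinuousOn g (Set.Icc (0:ℝ) 1)) {δ a b : ℝ}
    (ha : a ∈ Set.Icc (0:ℝ) 1) (hb : b ∈ Set.Icc (0:ℝ) 1) (h : |a - b| ≤ δ) :
    |g a - g b| ≤ modCont g δ :=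
  le_csSup (modCont_bddAbove hg δ) ⟨a, ha, b, hb, h, rfl⟩

lemma modCont_chain {g : ℝ → ℝ} (hg : ContinuousOn g (Set.Icc (0:ℝ) 1)) {δ : ℝ}
    (hδ : 0 ≤ δ) : ∀ m : ℕ, ∀ a ∈ Set.Icc (0:ℝ) 1, ∀ b ∈ Set.Icc (0:ℝ) 1,
      |a - b| ≤ m * δ → |g a - g b| ≤ m * modCont g δ := by
  intro m
  induction m with
  | zero =>
    intro a ha b hb h
    simp only [Nat.cast_zero, zero_mul] at h ⊢
    have : a = b := by
      have := abs_nonneg (a - b)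
      have : |a - b| = 0 := le_antisymm h this
      linarith [abs_eq_zero.mp this, sub_eq_zero.mp (abs_eq_zero.mp this)]
    simp [this]
  | succ m ih =>
    -- WLOG a ≤ b
    have key : ∀ a ∈ Set.Icc (0:ℝ) 1, ∀ b ∈ Set.Icc (0:ℝ) 1, a ≤ b →
        |a - b| ≤ (m + 1 : ℕ) * δ → |g a - g b| ≤ (m + 1 : ℕ) * modCont g δ := by
      intro a ha b hb hab h
      by_cases hcase : |a - b| ≤ m * δ
      · calc |g a - g b| ≤ m * modCont g δ := ih a ha b hb hcase
          _ ≤ (m + 1 : ℕ) * modCont g δ := by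
            have := modCont_nonneg hg hδ
            push_cast; nlinarith
      · push_neg at hcase
        have habs : |a - b| = b - a := by rw [abs_sub_comm]; exact abs_of_nonneg (by linarith)
        rw [habs] at h hcase
        set c := b - m * δ with hc
        have hmδ : 0 ≤ m * δ := by positivity
        have hac : a ≤ c := by simp [hc]; linarith
        have hcb : c ≤ b := by simp [hc]; linarith
        have hcI : c ∈ Set.Icc (0:ℝ) 1 := ⟨le_trans ha.1 hac, le_trans hcb hb.2⟩
        have h1 : |a - c| ≤ δ := by
          rw [abs_sub_comm, abs_of_nonneg (by linarith)]
          push_cast at h; simp [hc]; linarith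
        have h2 : |c - b| ≤ m * δ := by
          rw [abs_sub_comm, abs_of_nonneg (by linarith)]
          simp [hc]
        calc |g a - g b| ≤ |g a - g c| + |g c - g b| := abs_sub_le _ _ _
          _ ≤ modCont g δ + m * modCont g δ :=
            add_le_add (le_modCont hg ha hcI h1) (ih c hcI b hb h2)
          _ = (m + 1 : ℕ) * modCont g δ := by push_cast; ring
    intro a ha b hb h
    rcases le_total a b with hab | hab
    · exact key a ha b hb hab h
    · rw [abs_sub_comm] at h
      rw [abs_sub_comm]
      exact key b hb a ha hab h

lemma modCont_subadd {g : ℝ → ℝ} (hg : ContinuousOn g (Set.Icc (0:ℝ) 1)) {δ : ℝ}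
    (hδ : 0 < δ) {a b : ℝ} (ha : a ∈ Set.Icc (0:ℝ) 1) (hb : b ∈ Set.Icc (0:ℝ) 1) :
    |g a - g b| ≤ (1 + |a - b| / δ) * modCont g δ := by
  set m := ⌈|a - b| / δ⌉₊ with hm
  have h1 : |a - b| ≤ m * δ := by
    rw [← div_le_iff₀ hδ]
    exact Nat.le_ceil _
  have h2 : (m : ℝ) ≤ 1 + |a - b| / δ := by
    have := Nat.ceil_lt_add_one (by positivity : (0:ℝ) ≤ |a - b| / δ)
    rw [hm]; push_cast; linarith
  calc |g a - g b| ≤ m * modCont g δ := modCont_chain hg hδ.le m a ha b hb h1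
    _ ≤ (1 + |a - b| / δ) * modCont g δ :=
      mul_le_mul_of_nonneg_right h2 (modCont_nonneg hg hδ.le)

lemma deriv_le_lip {φ φ' : ℝ → ℝ} {Lφ Lφ' : ℝ}
    (hφderiv : ∀ x ∈ Set.Icc (0:ℝ) 1, HasDerivWithinAt φ (φ' x) (Set.Icc (0:ℝ) 1) x)
    (hLφ : ∀ x ∈ Set.Icc (0:ℝ) 1, ∀ y ∈ Set.Icc (0:ℝ) 1, |φ x - φ y| ≤ Lφ * |x - y|)
    (hLφ' : ∀ x ∈ Set.Icc (0:ℝ) 1, ∀ y ∈ Set.Icc (0:ℝ) 1, |φ' x - φ' y| ≤ Lφ' * |x - y|)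
    (hLφ0 : 0 ≤ Lφ) (hLφ'0 : 0 ≤ Lφ') :
    ∀ x ∈ Set.Icc (0:ℝ) 1, |φ' x| ≤ Lφ := by
  have lip : LipschitzOnWith Lφ.toNNReal φ (Set.Icc (0:ℝ) 1) := by
    rw [lipschitzOnWith_iff_dist_le_mul]
    intro x hx y hy
    rw [Real.dist_eq, Real.dist_eq, Real.coe_toNNReal _ hLφ0]
    exact hLφ x hx y hy
  have hint : ∀ x ∈ Set.Ioo (0:ℝ) 1, |φ' x| ≤ Lφ := by
    intro x hx
    have hD : HasDerivAt φ (φ' x) x :=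
      (hφderiv x (Set.Ioo_subset_Icc_self hx)).hasDerivAt (Icc_mem_nhds hx.1 hx.2)
    have := hD.le_of_lipschitzOn (Icc_mem_nhds hx.1 hx.2) lip
    rwa [Real.norm_eq_abs, Real.coe_toNNReal _ hLφ0] at this
  intro x hx
  refine le_of_forall_pos_le_add fun ε hε => ?_
  set e : ℝ := min (ε / (Lφ' + 1)) (1/4) with he
  have he0 : 0 < e := by
    apply lt_min (by positivity) (by norm_num)
  have heε : Lφ' * e ≤ ε := by
    have h1 : e ≤ ε / (Lφ' + 1) := min_le_left _ _
    have h2 : Lφ' * e ≤ Lφ' * (ε / (Lφ' + 1)) := by nlinarith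
    have h3 : Lφ' * (ε / (Lφ' + 1)) ≤ ε := by
      rw [mul_div_assoc']
      rw [div_le_iff₀ (by positivity)]
      nlinarith
    linarith
  have he4 : e ≤ 1/4 := min_le_right _ _
  obtain ⟨t, htI, hxt⟩ : ∃ t, t ∈ Set.Ioo (0:ℝ) 1 ∧ |x - t| ≤ e := by
    by_cases hhalf : x ≤ 1/2
    · exact ⟨x + e, ⟨by linarith [hx.1], by linarith⟩, by rw [abs_sub_comm]; simp; rw [abs_of_nonneg he0.le]⟩
    · exact ⟨x - e, ⟨by linarith, by linarith [hx.2]⟩, by simp [abs_of_nonneg he0.le]⟩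
  calc |φ' x| ≤ |φ' x - φ' t| + |φ' t| := by
        have := abs_sub_le (φ' x) (φ' t) 0
        simpa using this
    _ ≤ Lφ' * |x - t| + Lφ :=
        add_le_add (hLφ' x hx t (Set.Ioo_subset_Icc_self htI)) (hint t htI)
    _ ≤ Lφ + ε := by
        have : Lφ' * |x - t| ≤ Lφ' * e := by nlinarith [abs_nonneg (x - t)]
        linarith

lemma final_numeric (A B s : ℝ) (hs : 0 < s) (hA : 0 ≤ A) (hB : 0 ≤ B) :
    A * (1/(2*s)) + (A * (2*s)) * (1/(4*(s*s))) + B * (1/(4*(s*s)))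
      ≤ (1/s) * (A + B * (1/(2*s))) := by
  have h1 : A * (1/(2*s)) + (A * (2*s)) * (1/(4*(s*s))) + B * (1/(4*(s*s)))
      = A/s + B/(4*(s*s)) := by field_simp; ring
  have h2 : (1/s) * (A + B * (1/(2*s))) = A/s + B/(2*(s*s)) := by field_simp
  rw [h1, h2]
  have h3 : B/(4*(s*s)) ≤ B/(2*(s*s)) := by
    rw [div_le_div_iff₀ (by positivity) (by positivity)]
    nlinarith
  linarith
theorem stmt13 (φ φ' f f' : ℝ → ℝ)
    (hφmap : Set.MapsTo φ (Set.Icc (0 : ℝ) 1) (Set.Icc (0 : ℝ) 1))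
    (hφderiv : ∀ x ∈ Set.Icc (0 : ℝ) 1, HasDerivWithinAt φ (φ' x) (Set.Icc (0 : ℝ) 1) x)
    (hφ' : ContinuousOn φ' (Set.Icc (0 : ℝ) 1))
    (hfderiv : ∀ x ∈ Set.Icc (0 : ℝ) 1, HasDerivWithinAt f (f' x) (Set.Icc (0 : ℝ) 1) x)
    (hf' : ContinuousOn f' (Set.Icc (0 : ℝ) 1))
    (Lφ Lφ' : ℝ)
    (hLφ : ∀ x ∈ Set.Icc (0 : ℝ) 1, ∀ y ∈ Set.Icc (0 : ℝ) 1,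
      |φ x - φ y| ≤ Lφ * |x - y|)
    (hLφ' : ∀ x ∈ Set.Icc (0 : ℝ) 1, ∀ y ∈ Set.Icc (0 : ℝ) 1,
      |φ' x - φ' y| ≤ Lφ' * |x - y|)
    (n : ℕ) (hn : 1 ≤ n) :
    (⨆ x : Set.Icc (0 : ℝ) 1, |bernOp n (f ∘ φ) x - f (φ x)|)
      ≤ (1 / Real.sqrt n) * (Lφ * modCont f' (Lφ / (2 * Real.sqrt n))
          + (⨆ x : Set.Icc (0 : ℝ) 1, |f' (φ x)|) * (Lφ' / (2 * Real.sqrt n))) := by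
  have hnR : (0:ℝ) < n := by exact_mod_cast hn
  set s : ℝ := Real.sqrt n with hs
  have hs0 : 0 < s := Real.sqrt_pos.mpr hnR
  have hs2 : s * s = n := Real.mul_self_sqrt hnR.le
  -- Lipschitz constants are nonnegative
  have hLφ0 : 0 ≤ Lφ := by
    have h := hLφ 0 (by norm_num) 1 (by norm_num)
    have h2 := abs_nonneg (φ 0 - φ 1)
    simp only [zero_sub, abs_neg, abs_one, mul_one] at h
    linarith
  have hLφ'0 : 0 ≤ Lφ' := by
    have h := hLφ' 0 (by norm_num) 1 (by norm_num)
    have h2 := abs_nonneg (φ' 0 - φ' 1)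
    simp only [zero_sub, abs_neg, abs_one, mul_one] at h
    linarith
  -- the sup of |f' ∘ φ|
  set M : ℝ := ⨆ x : Set.Icc (0 : ℝ) 1, |f' (φ x)| with hMdef
  have hMb : BddAbove (Set.range fun x : Set.Icc (0:ℝ) 1 => |f' (φ x)|) := by
    obtain ⟨C, hC⟩ := isCompact_Icc.exists_bound_of_continuousOn hf'
    refine ⟨C, ?_⟩
    rintro r ⟨x, rfl⟩
    simpa using hC (φ x) (hφmap x.2)
  have hM : ∀ x ∈ Set.Icc (0:ℝ) 1, |f' (φ x)| ≤ M := fun x hx =>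
    le_ciSup hMb (⟨x, hx⟩ : Set.Icc (0:ℝ) 1)
  have hM0 : 0 ≤ M := le_trans (abs_nonneg _) (hM 0 (by norm_num))
  set δ0 : ℝ := 1 / (2 * s) with hδ0def
  have hδ0 : 0 < δ0 := by positivity
  set η : ℝ := Lφ / (2 * s) with hηdef
  have hηδ : η = Lφ * δ0 := by rw [hηdef, hδ0def]; ring
  have hη0 : 0 ≤ η := by positivity
  set ω : ℝ := modCont f' η with hωdef
  have hω0 : 0 ≤ ω := modCont_nonneg hf' hη0
  have hφ'le : ∀ x ∈ Set.Icc (0:ℝ) 1, |φ' x| ≤ Lφ :=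
    deriv_le_lip hφderiv hLφ hLφ' hLφ0 hLφ'0
  -- derivative difference bound
  have hD : ∀ t ∈ Set.Icc (0:ℝ) 1, ∀ x ∈ Set.Icc (0:ℝ) 1,
      |f' (φ t) * φ' t - f' (φ x) * φ' x|
        ≤ Lφ * ((1 + |t - x| / δ0) * ω) + M * (Lφ' * |t - x|) := by
    intro t ht x hx
    have hφt := hφmap ht
    have hφx := hφmap hx
    have e1 : |f' (φ t) - f' (φ x)| ≤ (1 + |t - x| / δ0) * ω := by
      by_cases hLp : 0 < Lφ
      · have hηpos : 0 < η := by rw [hηdef]; positivity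
        have h := modCont_subadd hf' hηpos hφt hφx
        refine h.trans ?_
        apply mul_le_mul_of_nonneg_right _ hω0
        have h2 : |φ t - φ x| / η ≤ |t - x| / δ0 := by
          rw [hηδ]
          calc |φ t - φ x| / (Lφ * δ0) ≤ (Lφ * |t - x|) / (Lφ * δ0) := by
                apply div_le_div_of_nonneg_right (hLφ t ht x hx)
                positivity
            _ = |t - x| / δ0 := by rw [mul_div_mul_left _ _ (ne_of_gt hLp)]
        linarith
      · have hLz : Lφ = 0 := le_antisymm (not_lt.mp hLp) hLφ0
        have : |φ t - φ x| ≤ 0 := by have := hLφ t ht x hx; rw [hLz] at this; simpa using this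
        have heq : φ t = φ x := by
          have := abs_nonneg (φ t - φ x)
          have h0 : |φ t - φ x| = 0 := le_antisymm ‹_› this
          have := abs_eq_zero.mp h0
          linarith [sub_eq_zero.mp this]
        rw [heq]
        simp only [sub_self, abs_zero]
        positivity
    have e2 : |φ' t| ≤ Lφ := hφ'le t ht
    have e3 : |f' (φ x)| ≤ M := hM x hx
    have e4 : |φ' t - φ' x| ≤ Lφ' * |t - x| := hLφ' t ht x hx
    calc |f' (φ t) * φ' t - f' (φ x) * φ' x|
        = |(f' (φ t) - f' (φ x)) * φ' t + f' (φ x) * (φ' t - φ' x)| := by ring_nf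
      _ ≤ |(f' (φ t) - f' (φ x)) * φ' t| + |f' (φ x) * (φ' t - φ' x)| := abs_add_le _ _
      _ = |f' (φ t) - f' (φ x)| * |φ' t| + |f' (φ x)| * |φ' t - φ' x| := by
          rw [abs_mul, abs_mul]
      _ ≤ ((1 + |t - x| / δ0) * ω) * Lφ + M * (Lφ' * |t - x|) := by
          apply add_le_add
          · apply mul_le_mul e1 e2 (abs_nonneg _) (by positivity)
          · apply mul_le_mul e3 e4 (abs_nonneg _) hM0
      _ = Lφ * ((1 + |t - x| / δ0) * ω) + M * (Lφ' * |t - x|) := by ring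
  -- remainder bound
  have hR : ∀ x ∈ Set.Icc (0:ℝ) 1, ∀ k ∈ Finset.range (n+1),
      |f (φ ((k:ℝ)/n)) - f (φ x) - (f' (φ x) * φ' x) * ((k:ℝ)/n - x)|
        ≤ (Lφ * ((1 + |(k:ℝ)/n - x| / δ0) * ω) + M * (Lφ' * |(k:ℝ)/n - x|)) * |(k:ℝ)/n - x| := by
    intro x hx k hk
    set t : ℝ := (k:ℝ)/n with htdef
    have ht : t ∈ Set.Icc (0:ℝ) 1 := by
      constructor
      · positivity
      · rw [htdef, div_le_one hnR]
        exact_mod_cast Nat.lt_succ_iff.mp (Finset.mem_range.mp hk)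
    set c : ℝ := f' (φ x) * φ' x with hcdef
    set s' : Set ℝ := Set.Icc (min x t) (max x t) with hs'def
    have hsub : s' ⊆ Set.Icc (0:ℝ) 1 :=
      Set.Icc_subset_Icc (le_min hx.1 ht.1) (max_le hx.2 ht.2)
    set C : ℝ := Lφ * ((1 + |t - x| / δ0) * ω) + M * (Lφ' * |t - x|) with hCdef
    have hderiv : ∀ y ∈ s',
        HasDerivWithinAt (fun u => f (φ u) - c * u) (f' (φ y) * φ' y - c) s' y := by
      intro y hy
      have h1 : HasDerivWithinAt (f ∘ φ) (f' (φ y) * φ' y) (Set.Icc (0:ℝ) 1) y :=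
        (hfderiv (φ y) (hφmap (hsub hy))).comp y (hφderiv y (hsub hy)) hφmap
      have h2 : HasDerivWithinAt (fun u => c * u) (c * 1) s' y :=
        (hasDerivWithinAt_id y s').const_mul c
      have h3 := (h1.mono hsub).sub h2
      simp only [mul_one] at h3; exact h3
    have hbound : ∀ y ∈ s', ‖f' (φ y) * φ' y - c‖ ≤ C := by
      intro y hy
      rw [Real.norm_eq_abs]
      have hyx : |y - x| ≤ |t - x| := by
        rcases le_total x t with h | h
        · rw [hs'def] at hy
          rw [min_eq_left h, max_eq_right h] at hy
          rw [abs_of_nonneg (by linarith [hy.1]), abs_of_nonneg (by linarith)]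
          linarith [hy.2]
        · rw [hs'def] at hy
          rw [min_eq_right h, max_eq_left h] at hy
          rw [abs_of_nonpos (by linarith [hy.2]), abs_of_nonpos (by linarith)]
          linarith [hy.1]
      refine (hD y (hsub hy) x hx).trans ?_
      rw [hCdef]
      gcongr
    have hxs' : x ∈ s' := Set.mem_Icc.mpr ⟨min_le_left x t, le_max_left x t⟩
    have hts' : t ∈ s' := Set.mem_Icc.mpr ⟨min_le_right x t, le_max_right x t⟩
    have key := (convex_Icc (min x t) (max x t)).norm_image_sub_le_of_norm_hasDerivWithin_le
      hderiv hbound hxs' hts'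
    rw [Real.norm_eq_abs, Real.norm_eq_abs] at key
    calc |f (φ t) - f (φ x) - c * (t - x)|
        = |(f (φ t) - c * t) - (f (φ x) - c * x)| := by ring_nf
      _ ≤ C * |t - x| := key
  -- pointwise estimate
  have hpoint : ∀ x ∈ Set.Icc (0:ℝ) 1,
      |bernOp n (f ∘ φ) x - f (φ x)|
        ≤ (1 / s) * (Lφ * ω + M * (Lφ' / (2 * s))) := by
    intro x hx
    set c : ℝ := f' (φ x) * φ' x with hcdef
    have h1 := bern_sum n x
    have h2 := bern_mean n hn x
    have hE : bernOp n (f ∘ φ) x - f (φ x)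
        = ∑ k ∈ Finset.range (n+1),
            (f (φ ((k:ℝ)/n)) - f (φ x) - c * ((k:ℝ)/n - x)) * bern n k x := by
      have e1 : ∑ k ∈ Finset.range (n+1), f (φ x) * bern n k x = f (φ x) := by
        rw [← Finset.mul_sum, h1, mul_one]
      have e2 : ∑ k ∈ Finset.range (n+1), c * (((k:ℝ)/n - x) * bern n k x) = 0 := by
        rw [← Finset.mul_sum, h2, mul_zero]
      rw [eq_comm]
      calc ∑ k ∈ Finset.range (n+1),
              (f (φ ((k:ℝ)/n)) - f (φ x) - c * ((k:ℝ)/n - x)) * bern n k x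
          = ∑ k ∈ Finset.range (n+1), (f (φ ((k:ℝ)/n)) * bern n k x
              - (f (φ x) * bern n k x + c * (((k:ℝ)/n - x) * bern n k x))) :=
            Finset.sum_congr rfl fun k _ => by ring
        _ = (∑ k ∈ Finset.range (n+1), f (φ ((k:ℝ)/n)) * bern n k x)
              - ((∑ k ∈ Finset.range (n+1), f (φ x) * bern n k x)
                + ∑ k ∈ Finset.range (n+1), c * (((k:ℝ)/n - x) * bern n k x)) := by
            rw [Finset.sum_sub_distrib, Finset.sum_add_distrib]
        _ = bernOp n (f ∘ φ) x - f (φ x) := by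
            rw [e1, e2, bernOp]
            simp [Function.comp]
    set S1 : ℝ := ∑ k ∈ Finset.range (n+1), |(k:ℝ)/n - x| * bern n k x with hS1
    set S2 : ℝ := ∑ k ∈ Finset.range (n+1), ((k:ℝ)/n - x)^2 * bern n k x with hS2
    have hS2val : S2 = x*(1-x)/n := bern_var n hn x
    have hS2le : S2 ≤ 1/(4*n) := by
      rw [hS2val, div_le_div_iff₀ hnR (by positivity)]
      nlinarith [hx.1, hx.2, mul_nonneg (sq_nonneg (2*x - 1)) hnR.le]
    have hS10 : 0 ≤ S1 :=
      Finset.sum_nonneg fun k _ => mul_nonneg (abs_nonneg _) (bern_nonneg n k hx)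
    have hS1le : S1 ≤ 1/(2*s) := by
      have hcs := Finset.sum_sq_le_sum_mul_sum_of_sq_eq_mul (Finset.range (n+1))
        (r := fun k => |(k:ℝ)/n - x| * bern n k x)
        (f := fun k => bern n k x)
        (g := fun k => ((k:ℝ)/n - x)^2 * bern n k x)
        (fun k _ => bern_nonneg n k hx)
        (fun k _ => mul_nonneg (sq_nonneg _) (bern_nonneg n k hx))
        (fun k _ => by rw [mul_pow, sq_abs]; ring)
      rw [h1, one_mul] at hcs
      have h4 : S1^2 ≤ 1/(4*(n:ℝ)) := le_trans hcs hS2le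
      have h5 : (1/(2*s))^2 = 1/(4*(n:ℝ)) := by
        rw [div_pow, one_pow, mul_pow, show s^2 = (n:ℝ) by rw [sq]; exact hs2]
        norm_num
      by_contra hcon
      push_neg at hcon
      have := pow_lt_pow_left₀ hcon (by positivity) (two_ne_zero)
      linarith
    have hsum : |bernOp n (f ∘ φ) x - f (φ x)|
        ≤ Lφ * ω * S1 + (Lφ * ω / δ0) * S2 + M * Lφ' * S2 := by
      rw [hE]
      refine (Finset.abs_sum_le_sum_abs _ _).trans ?_
      have step : ∀ k ∈ Finset.range (n+1),
          |(f (φ ((k:ℝ)/n)) - f (φ x) - c * ((k:ℝ)/n - x)) * bern n k x|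
            ≤ (Lφ * ω) * (|(k:ℝ)/n - x| * bern n k x)
              + (Lφ * ω / δ0) * (((k:ℝ)/n - x)^2 * bern n k x)
              + (M * Lφ') * (((k:ℝ)/n - x)^2 * bern n k x) := by
        intro k hk
        have hb := bern_nonneg n k hx
        have hineq := mul_le_mul_of_nonneg_right (hR x hx k hk) hb
        rw [abs_mul, abs_of_nonneg hb]
        refine hineq.trans (le_of_eq ?_)
        have habs : |(k:ℝ)/n - x| * |(k:ℝ)/n - x| = ((k:ℝ)/n - x)^2 := by
          rw [← sq_abs]; ring
        rw [← habs]
        set e : ℝ := |(k:ℝ)/(n:ℝ) - x| with hedef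
        rw [hδ0def]
        field_simp
      refine (Finset.sum_le_sum step).trans (le_of_eq ?_)
      rw [Finset.sum_add_distrib, Finset.sum_add_distrib,
        ← Finset.mul_sum, ← Finset.mul_sum, ← Finset.mul_sum]
    refine hsum.trans ?_
    have hLω0 : 0 ≤ Lφ * ω := mul_nonneg hLφ0 hω0
    have hML0 : 0 ≤ M * Lφ' := mul_nonneg hM0 hLφ'0
    have h1' : Lφ * ω * S1 ≤ Lφ * ω * (1/(2*s)) :=
      mul_le_mul_of_nonneg_left hS1le hLω0
    have h2' : (Lφ * ω / δ0) * S2 ≤ (Lφ * ω / δ0) * (1/(4*n)) :=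
      mul_le_mul_of_nonneg_left hS2le (div_nonneg hLω0 hδ0.le)
    have h3' : M * Lφ' * S2 ≤ M * Lφ' * (1/(4*n)) :=
      mul_le_mul_of_nonneg_left hS2le hML0
    have hδ0inv : Lφ * ω / δ0 = Lφ * ω * (2*s) := by
      rw [hδ0def]; field_simp
    have hfinal : Lφ * ω * (1/(2*s)) + (Lφ * ω / δ0) * (1/(4*n)) + M * Lφ' * (1/(4*n))
        ≤ (1 / s) * (Lφ * ω + M * (Lφ' / (2 * s))) := by
      have hn4 : (1:ℝ)/(4*(n:ℝ)) = 1/(4*(s*s)) := by rw [hs2]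
      rw [hδ0inv, hn4]
      have key := final_numeric (Lφ*ω) (M*Lφ') s hs0 hLω0 hML0
      refine key.trans (le_of_eq (by ring))
    linarith
  have hne : Nonempty (Set.Icc (0:ℝ) 1) := ⟨⟨0, by norm_num⟩⟩
  exact ciSup_le fun x => hpoint x x.2
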